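/- Let (L₁, …, L_h; w₁, …, w_h) be a vertex hierarchy of height h on the weighted graph G = (V, w₁). Then for all s, t ∈ V: dist_G(s,t) = ⨅_{x ∈ Anc(s) ∩ Anc(t)} ( dist_G(s,x) + dist_G(t,x) ), where the infimum in ℕ∞ over the empty set is ⊤. In particular, s and t are connected in G if and only if they have a common ancestor, and in that case the minimum of dist_G(s,x) + dist_G(t,x) over common ancestors x equals dist_G(s,t). -/

import Mathlib

namespace ISLabel

variable {V : Type*}

/-- Two vertices are adjacent in the weighted graph `w` when they are distinct and
joined by an edge of finite weight. -/
def Adj (w : V → V → ℕ∞) (u v : V) : Prop := u ≠ v ∧ w u v < ⊤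

/-- `p` is a walk from `u` to `v` in the weighted graph `w`: a nonempty list of
vertices starting at `u`, ending at `v`, with consecutive vertices adjacent. -/
def IsWalk (w : V → V → ℕ∞) (u v : V) (p : List V) : Prop :=
  p ≠ [] ∧ p.head? = some u ∧ p.getLast? = some v ∧ p.Chain' (Adj w)

/-- The length of a list of vertices: the sum of `f` over consecutive pairs. -/
def pathLen (f : V → V → ℕ∞) (p : List V) : ℕ∞ :=
  ((p.zip p.tail).map fun e => f e.1 e.2).sum

/-- The distance from `u` to `v` in `w`: the infimum of the lengths of all walks
from `u` to `v` (`⊤` if there is no such walk). -/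
noncomputable def wdist (w : V → V → ℕ∞) (u v : V) : ℕ∞ :=
  ⨅ p : {p : List V // IsWalk w u v p}, pathLen w p.1

/-- `I` is an independent set in `w`. -/
def IsIndep (w : V → V → ℕ∞) (I : Set V) : Prop :=
  ∀ u ∈ I, ∀ v ∈ I, ¬ Adj w u v

/-- `w` is a weighted undirected graph: symmetric, and every off-diagonal value is
either `⊤` (no edge) or a weight `≥ 1`. -/
def IsWGraph (w : V → V → ℕ∞) : Prop :=
  (∀ u v, w u v = w v u) ∧ ∀ u v, u ≠ v → 1 ≤ w u v

/-- `w` is supported on `S`: all weights touching a vertex outside `S` are `⊤`. -/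
def SupportedOn (w : V → V → ℕ∞) (S : Set V) : Prop :=
  ∀ u v, u ∉ S ∨ v ∉ S → w u v = ⊤

/-- `VsetOf L i` is the vertex set `V_i = V ∖ (L₁ ∪ … ∪ L_{i-1})`. -/
def VsetOf (L : ℕ → Set V) (i : ℕ) : Set V := {v | ∀ j, 1 ≤ j → j < i → v ∉ L j}

/-- A vertex hierarchy of height `h ≥ 1` on the weighted graph `w 1`:
pairwise disjoint independent levels `L 1, …, L h` covering `V`, and graphs
`w i` supported on `V_i` obtained by the augmenting-edge construction. -/
structure VertexHierarchy (V : Type*) (h : ℕ) where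
  L : ℕ → Set V
  w : ℕ → V → V → ℕ∞
  h_pos : 1 ≤ h
  wgraph : ∀ i, 1 ≤ i → i ≤ h → IsWGraph (w i)
  disj : ∀ i j, 1 ≤ i → i ≤ h → 1 ≤ j → j ≤ h → i ≠ j → ∀ v, v ∈ L i → v ∉ L j
  cover : ∀ v : V, ∃ i, 1 ≤ i ∧ i ≤ h ∧ v ∈ L i
  supported : ∀ i, 1 ≤ i → i ≤ h → SupportedOn (w i) (VsetOf L i)
  aug : ∀ i, 2 ≤ i → i ≤ h → ∀ u v : V, u ≠ v → u ∈ VsetOf L i → v ∈ VsetOf L i →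
    w i u v = min (w (i - 1) u v) (⨅ x ∈ L (i - 1), w (i - 1) u x + w (i - 1) x v)
  indep : ∀ i, 1 ≤ i → i ≤ h → IsIndep (w i) (L i)

/-- The level `ℓ(v)`: the unique `i` with `1 ≤ i ≤ h` and `v ∈ L i`. -/
noncomputable def level {h : ℕ} (H : VertexHierarchy V h) (v : V) : ℕ :=
  sInf {i | 1 ≤ i ∧ i ≤ h ∧ v ∈ H.L i}

/-- One step of an ascending sequence: go to a strictly higher-level vertex that is
adjacent in the graph at the current vertex's level. -/
def AscStep {h : ℕ} (H : VertexHierarchy V h) (a b : V) : Prop :=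
  level H a < level H b ∧ Adj (H.w (level H a)) a b

/-- `p` is an ascending sequence from `v` to `u`. -/
def IsAscending {h : ℕ} (H : VertexHierarchy V h) (v u : V) (p : List V) : Prop :=
  p ≠ [] ∧ p.head? = some v ∧ p.getLast? = some u ∧ p.Chain' (AscStep H)

/-- The set of ancestors of `v`. -/
def Anc {h : ℕ} (H : VertexHierarchy V h) (v : V) : Set V :=
  {u | ∃ p, IsAscending H v u p}

/-- `d(v,u)`: the infimum of the lengths of ascending sequences from `v` to `u`,
where each step `a → b` costs `w (ℓ(a)) a b`; `⊤` if `u` is not an ancestor of `v`. -/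
noncomputable def ancDist {h : ℕ} (H : VertexHierarchy V h) (v u : V) : ℕ∞ :=
  ⨅ p : {p : List V // IsAscending H v u p},
    pathLen (fun a b => H.w (level H a) a b) p.1
/-! ### Auxiliary lemmas -/

lemma pathLen_nil (f : V → V → ℕ∞) : pathLen f [] = 0 := rfl

lemma pathLen_single (f : V → V → ℕ∞) (a : V) : pathLen f [a] = 0 := rfl

lemma pathLen_cons_cons (f : V → V → ℕ∞) (a b : V) (l : List V) :
    pathLen f (a :: b :: l) = f a b + pathLen f (b :: l) := by
  simp [pathLen]

lemma pathLen_append (f : V → V → ℕ∞) (x : V) :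
    ∀ p : List V, p ≠ [] → p.getLast? = some x → ∀ q : List V, q.head? = some x →
      pathLen f (p ++ q.tail) = pathLen f p + pathLen f q := by
  intro p
  induction p with
  | nil => intro hp; exact absurd rfl hp
  | cons a p' ih =>
    intro _ hl q hh
    cases p' with
    | nil =>
      simp only [List.getLast?_singleton, Option.some.injEq] at hl
      subst hl
      cases q with
      | nil => simp at hh
      | cons b q' =>
        simp only [List.head?_cons, Option.some.injEq] at hh
        subst hh
        simp [pathLen_single]
    | cons b p'' =>
      have hl' : (b :: p'').getLast? = some x := by rwa [List.getLast?_cons_cons] at hl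
      have e := ih (by simp) hl' q hh
      calc pathLen f ((a :: b :: p'') ++ q.tail)
          = f a b + pathLen f ((b :: p'') ++ q.tail) := by
            simp only [List.cons_append]; rw [pathLen_cons_cons]
        _ = f a b + (pathLen f (b :: p'') + pathLen f q) := by rw [e]
        _ = pathLen f (a :: b :: p'') + pathLen f q := by rw [pathLen_cons_cons, add_assoc]

lemma trail_append {R : V → V → Prop} {u x v : V} {p q : List V}
    (hp : p ≠ [] ∧ p.head? = some u ∧ p.getLast? = some x ∧ p.Chain' R)
    (hq : q ≠ [] ∧ q.head? = some x ∧ q.getLast? = some v ∧ q.Chain' R) :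
    (p ++ q.tail) ≠ [] ∧ (p ++ q.tail).head? = some u ∧
      (p ++ q.tail).getLast? = some v ∧ (p ++ q.tail).Chain' R := by
  obtain ⟨hp1, hp2, hp3, hp4⟩ := hp
  obtain ⟨hq1, hq2, hq3, hq4⟩ := hq
  obtain ⟨b, q', rfl⟩ : ∃ b q', q = b :: q' := by
    cases q with
    | nil => exact absurd rfl hq1
    | cons b q' => exact ⟨b, q', rfl⟩
  simp only [List.head?_cons, Option.some.injEq] at hq2
  subst hq2
  refine ⟨by simp [hp1], ?_, ?_, ?_⟩
  · cases p with
    | nil => exact absurd rfl hp1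
    | cons a p' => simpa using hp2
  · cases q' with
    | nil =>
      simp only [List.tail_cons, List.append_nil]
      rw [hp3]
      simpa using hq3
    | cons c q'' =>
      rw [List.tail_cons, List.getLast?_append_of_ne_nil p (by simp)]
      rwa [List.getLast?_cons_cons] at hq3
  · rw [List.tail_cons]; simp only [List.Chain', List.isChain_append]
    refine ⟨hp4, (List.isChain_cons.1 hq4).2, ?_⟩
    intro y hy z hz
    rw [hp3, Option.mem_some_iff] at hy
    subst hy
    exact (List.isChain_cons.1 hq4).1 z hz

lemma pathLen_reverse (f : V → V → ℕ∞) :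
    ∀ p : List V, pathLen f p.reverse = pathLen (fun a b => f b a) p := by
  intro p
  induction p with
  | nil => rfl
  | cons a l ih =>
    cases l with
    | nil => rfl
    | cons x l' =>
      have h1 : (x :: l').reverse ≠ [] := by simp
      have h2 : (x :: l').reverse.getLast? = some x := by
        rw [List.getLast?_reverse]; rfl
      have key : pathLen f ((x :: l').reverse ++ [a]) =
          pathLen f (x :: l').reverse + pathLen f [x, a] :=
        pathLen_append f x _ h1 h2 [x, a] rfl
      calc pathLen f ((a :: x :: l').reverse)
          = pathLen f ((x :: l').reverse ++ [a]) := by rw [List.reverse_cons]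
        _ = pathLen f (x :: l').reverse + pathLen f [x, a] := key
        _ = pathLen (fun a b => f b a) (x :: l') + f x a := by
            rw [ih, pathLen_cons_cons, pathLen_single, add_zero]
        _ = pathLen (fun a b => f b a) (a :: x :: l') := by
            rw [pathLen_cons_cons]; exact (add_comm _ _)

lemma wdist_le_pathLen {w : V → V → ℕ∞} {u v : V} {p : List V} (hp : IsWalk w u v p) :
    wdist w u v ≤ pathLen w p :=
  iInf_le (fun q : {q : List V // IsWalk w u v q} => pathLen w q.1) ⟨p, hp⟩

lemma isWalk_single (w : V → V → ℕ∞) (v : V) : IsWalk w v v [v] :=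
  ⟨by simp, rfl, by simp, List.isChain_singleton v⟩

lemma wdist_self (w : V → V → ℕ∞) (v : V) : wdist w v v = 0 :=
  le_antisymm (by simpa [pathLen_single] using wdist_le_pathLen (isWalk_single w v))
    (zero_le)

lemma wdist_eq_top {w : V → V → ℕ∞} {u v : V} (h : ¬ ∃ p, IsWalk w u v p) :
    wdist w u v = ⊤ := by
  have : IsEmpty {p : List V // IsWalk w u v p} := ⟨fun q => h ⟨q.1, q.2⟩⟩
  exact iInf_of_empty _

lemma exists_walk_wdist {w : V → V → ℕ∞} {u v : V} (h : ∃ p, IsWalk w u v p) :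
    ∃ p, IsWalk w u v p ∧ wdist w u v = pathLen w p := by
  obtain ⟨p0, hp0⟩ := h
  have hne : (Set.range fun q : {q : List V // IsWalk w u v q} => pathLen w q.1).Nonempty :=
    ⟨_, ⟨⟨p0, hp0⟩, rfl⟩⟩
  have hm : wdist w u v ∈ Set.range fun q : {q : List V // IsWalk w u v q} => pathLen w q.1 := by
    rw [wdist, iInf]
    exact csInf_mem hne
  obtain ⟨⟨p, hp⟩, he⟩ := hm
  exact ⟨p, hp, he.symm⟩

lemma wdist_triangle (w : V → V → ℕ∞) (u x v : V) :
    wdist w u v ≤ wdist w u x + wdist w x v := by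
  by_cases h1 : ∃ p, IsWalk w u x p
  · by_cases h2 : ∃ q, IsWalk w x v q
    · obtain ⟨p, hp, ep⟩ := exists_walk_wdist h1
      obtain ⟨q, hq, eq2⟩ := exists_walk_wdist h2
      have hw := trail_append hp hq
      have hlen := pathLen_append w x p hp.1 hp.2.2.1 q hq.2.1
      rw [ep, eq2, ← hlen]
      exact wdist_le_pathLen hw
    · rw [wdist_eq_top h2, add_top]; exact le_top
  · rw [wdist_eq_top h1, top_add]; exact le_top

lemma adj_symm {w : V → V → ℕ∞} (hs : ∀ a b, w a b = w b a) {a b : V} (h : Adj w a b) :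
    Adj w b a :=
  ⟨h.1.symm, by rw [hs]; exact h.2⟩

lemma isWalk_reverse {w : V → V → ℕ∞} {u v : V} {p : List V}
    (hs : ∀ a b, w a b = w b a) (h : IsWalk w u v p) : IsWalk w v u p.reverse := by
  obtain ⟨h1, h2, h3, h4⟩ := h
  refine ⟨by simp [h1], ?_, ?_, ?_⟩
  · rw [List.head?_reverse]; exact h3
  · rw [List.getLast?_reverse]; exact h2
  · simp only [List.Chain', List.isChain_reverse]
    exact h4.imp fun a b hab => adj_symm hs hab

lemma wdist_symm {w : V → V → ℕ∞} (hs : ∀ a b, w a b = w b a) (u v : V) :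
    wdist w u v = wdist w v u := by
  have key : ∀ a b : V, wdist w a b ≤ wdist w b a := by
    intro a b
    refine le_iInf fun q => ?_
    refine (wdist_le_pathLen (isWalk_reverse hs q.2)).trans ?_
    rw [pathLen_reverse]
    have hfe : (fun a b => w b a) = w := by funext c d; exact hs d c
    rw [hfe]
  exact le_antisymm (key u v) (key v u)

lemma pathLen_lt_top {f : V → V → ℕ∞} {R : V → V → Prop} (hf : ∀ a b, R a b → f a b < ⊤) :
    ∀ p : List V, p.Chain' R → pathLen f p < ⊤ := by
  intro p
  induction p with
  | nil => intro _; rw [pathLen_nil]; exact lt_of_le_of_ne le_top (by simp)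
  | cons a l ih =>
    cases l with
    | nil => intro _; rw [pathLen_single]; exact lt_of_le_of_ne le_top (by simp)
    | cons b l' =>
      intro hc
      simp only [List.Chain', List.isChain_cons_cons] at hc
      rw [pathLen_cons_cons]
      exact WithTop.add_lt_top.2 ⟨hf a b hc.1, ih hc.2⟩
section Hierarchy

variable {h : ℕ} (H : VertexHierarchy V h)

lemma level_spec (v : V) : 1 ≤ level H v ∧ level H v ≤ h ∧ v ∈ H.L (level H v) := by
  have hne : {i | 1 ≤ i ∧ i ≤ h ∧ v ∈ H.L i}.Nonempty := by
    obtain ⟨i, h1, h2, h3⟩ := H.cover v; exact ⟨i, h1, h2, h3⟩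
  exact Nat.sInf_mem hne

lemma level_eq {v : V} {i : ℕ} (h1 : 1 ≤ i) (h2 : i ≤ h) (h3 : v ∈ H.L i) :
    level H v = i := by
  obtain ⟨l1, l2, l3⟩ := level_spec H v
  by_contra hne
  exact H.disj _ _ l1 l2 h1 h2 hne v l3 h3

lemma mem_Vset_iff {i : ℕ} (hi : i ≤ h) {v : V} : v ∈ VsetOf H.L i ↔ i ≤ level H v := by
  obtain ⟨l1, l2, l3⟩ := level_spec H v
  constructor
  · intro hv
    by_contra hlt
    push_neg at hlt
    exact hv (level H v) l1 hlt l3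
  · intro hle j hj1 hji hmem
    have := level_eq H hj1 (by omega) hmem
    omega

lemma adj_level {i : ℕ} (h1 : 1 ≤ i) (h2 : i ≤ h) {u v : V} (hadj : Adj (H.w i) u v) :
    i ≤ level H u ∧ i ≤ level H v := by
  have hu : u ∈ VsetOf H.L i := by
    by_contra hu
    exact absurd hadj.2 (by rw [H.supported i h1 h2 u v (Or.inl hu)]; exact lt_irrefl ⊤)
  have hv : v ∈ VsetOf H.L i := by
    by_contra hv
    exact absurd hadj.2 (by rw [H.supported i h1 h2 u v (Or.inr hv)]; exact lt_irrefl ⊤)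
  exact ⟨(mem_Vset_iff H h2).1 hu, (mem_Vset_iff H h2).1 hv⟩

lemma wdist_one_le_w : ∀ i, 1 ≤ i → i ≤ h → ∀ u v : V, wdist (H.w 1) u v ≤ H.w i u v := by
  intro i
  induction i with
  | zero => intro h1; exact absurd h1 (by omega)
  | succ n ih =>
    intro _ hle u v
    rcases eq_or_ne u v with rfl | huv
    · rw [wdist_self]; exact zero_le
    rcases Nat.eq_zero_or_pos n with rfl | hn
    · rcases eq_or_lt_of_le (le_top : H.w 1 u v ≤ ⊤) with htop | hlt
      · rw [htop]; exact le_top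
      · have hw : IsWalk (H.w 1) u v [u, v] :=
          ⟨by simp, rfl, by simp, List.isChain_pair.2 ⟨huv, hlt⟩⟩
        simpa [pathLen_cons_cons, pathLen_single] using wdist_le_pathLen hw
    · by_cases hu : u ∈ VsetOf H.L (n + 1)
      · by_cases hv : v ∈ VsetOf H.L (n + 1)
        · rw [H.aug (n + 1) (by omega) hle u v huv hu hv]
          simp only [Nat.add_sub_cancel]
          refine le_min (ih hn (by omega) u v) (le_iInf₂ fun x hx => ?_)
          calc wdist (H.w 1) u v ≤ wdist (H.w 1) u x + wdist (H.w 1) x v :=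
                wdist_triangle _ u x v
            _ ≤ H.w n u x + H.w n x v :=
                add_le_add (ih hn (by omega) u x) (ih hn (by omega) x v)
        · rw [H.supported (n + 1) (by omega) hle u v (Or.inr hv)]; exact le_top
      · rw [H.supported (n + 1) (by omega) hle u v (Or.inl hu)]; exact le_top

lemma wdist_le_ascLen : ∀ (p : List V) (s x : V), IsAscending H s x p →
    wdist (H.w 1) s x ≤ pathLen (fun a b => H.w (level H a) a b) p := by
  intro p
  induction p with
  | nil => intro s x hp; exact absurd rfl hp.1
  | cons a l ih =>
    intro s x hp
    obtain ⟨_, h2, h3, h4⟩ := hp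
    simp only [List.head?_cons, Option.some.injEq] at h2
    subst h2
    cases l with
    | nil =>
      simp only [List.getLast?_singleton, Option.some.injEq] at h3
      subst h3
      rw [wdist_self, pathLen_single]
    | cons b l' =>
      simp only [List.Chain', List.isChain_cons_cons] at h4
      rw [List.getLast?_cons_cons] at h3
      have hasc : IsAscending H b x (b :: l') := ⟨by simp, rfl, h3, h4.2⟩
      obtain ⟨lspec1, lspec2, _⟩ := level_spec H a
      calc wdist (H.w 1) a x ≤ wdist (H.w 1) a b + wdist (H.w 1) b x :=
            wdist_triangle _ a b x
        _ ≤ H.w (level H a) a b + pathLen (fun a b => H.w (level H a) a b) (b :: l') :=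
            add_le_add (wdist_one_le_w H (level H a) lspec1 lspec2 a b) (ih b x hasc)
        _ = pathLen (fun a b => H.w (level H a) a b) (a :: b :: l') := by
            simp [pathLen_cons_cons]

lemma w_succ_le_edge {i : ℕ} (h1 : 1 ≤ i) (h2 : i + 1 ≤ h) {u v : V} (huv : u ≠ v)
    (hu : i + 1 ≤ level H u) (hv : i + 1 ≤ level H v) :
    H.w (i + 1) u v ≤ H.w i u v := by
  rw [H.aug (i + 1) (by omega) h2 u v huv ((mem_Vset_iff H h2).2 hu)
    ((mem_Vset_iff H h2).2 hv)]
  simp only [Nat.add_sub_cancel]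
  exact min_le_left _ _

lemma w_succ_le_shortcut {i : ℕ} (h1 : 1 ≤ i) (h2 : i + 1 ≤ h) {u v x : V} (huv : u ≠ v)
    (hu : i + 1 ≤ level H u) (hv : i + 1 ≤ level H v) (hx : x ∈ H.L i) :
    H.w (i + 1) u v ≤ H.w i u x + H.w i x v := by
  rw [H.aug (i + 1) (by omega) h2 u v huv ((mem_Vset_iff H h2).2 hu)
    ((mem_Vset_iff H h2).2 hv)]
  simp only [Nat.add_sub_cancel]
  exact le_trans (min_le_right _ _) (iInf₂_le x hx)

end Hierarchy
section Transform

variable {h : ℕ} (H : VertexHierarchy V h)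

lemma transform {i : ℕ} (h1 : 1 ≤ i) (hlt : i < h) :
    ∀ n, ∀ p : List V, p.length ≤ n → ∀ s t : V, IsWalk (H.w i) s t p →
      i + 1 ≤ level H s →
      ∃ t' qt p', IsAscending H t t' qt ∧ IsWalk (H.w (i + 1)) s t' p' ∧
        pathLen (H.w (i + 1)) p' + pathLen (fun a b => H.w (level H a) a b) qt ≤
          pathLen (H.w i) p := by
  have hih : i + 1 ≤ h := hlt
  have hsym := (H.wgraph i h1 (le_of_lt hlt)).1
  intro n
  induction n with
  | zero =>
    intro p hlen s t hw _
    cases p with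
    | nil => exact absurd rfl hw.1
    | cons a l => simp at hlen
  | succ n ih =>
    intro p hlen s t hw hs
    obtain ⟨hne, hhead, hlast, hchain⟩ := hw
    cases p with
    | nil => exact absurd rfl hne
    | cons a l =>
      simp only [List.head?_cons, Option.some.injEq] at hhead
      subst hhead
      cases l with
      | nil =>
        simp only [List.getLast?_singleton, Option.some.injEq] at hlast
        subst hlast
        refine ⟨a, [a], [a], ⟨by simp, rfl, by simp, List.isChain_singleton a⟩,
          ⟨by simp, rfl, by simp, List.isChain_singleton a⟩, ?_⟩
        simp [pathLen_single]
      | cons b l =>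
        simp only [List.Chain', List.isChain_cons_cons] at hchain
        obtain ⟨hab, hchain⟩ := hchain
        rw [List.getLast?_cons_cons] at hlast
        have hwb : IsWalk (H.w i) b t (b :: l) := ⟨by simp, rfl, hlast, hchain⟩
        have hlevels := adj_level H h1 (le_of_lt hlt) hab
        rcases lt_or_ge (level H b) (i + 1) with hbl | hbl
        · -- b is at level i, i.e. b ∈ L i
          have hbi : level H b = i := by omega
          have hbL : b ∈ H.L i := hbi ▸ (level_spec H b).2.2
          cases l with
          | nil =>
            -- p = [a, b], t = b : ascend from b back to a
            simp only [List.getLast?_singleton, Option.some.injEq] at hlast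
            subst hlast
            refine ⟨a, [b, a], [a], ?_, ?_, ?_⟩
            · refine ⟨by simp, rfl, by simp, List.isChain_pair.2 ⟨by omega, ?_⟩⟩
              rw [hbi]
              exact ⟨hab.1.symm, by rw [hsym b a]; exact hab.2⟩
            · exact ⟨by simp, rfl, by simp, List.isChain_singleton a⟩
            · simp only [pathLen_single, pathLen_cons_cons, zero_add, add_zero, hbi]
              exact le_of_eq (hsym b a)
          | cons c l' =>
            simp only [List.Chain', List.isChain_cons_cons] at hchain
            obtain ⟨hbc, hchain⟩ := hchain
            rw [List.getLast?_cons_cons] at hlast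
            have hlevels2 := adj_level H h1 (le_of_lt hlt) hbc
            have hcl : i + 1 ≤ level H c := by
              rcases eq_or_lt_of_le hlevels2.2 with he | hl
              · exfalso
                have hcL : c ∈ H.L i := he ▸ (level_spec H c).2.2
                exact H.indep i h1 (le_of_lt hlt) b hbL c hcL hbc
              · omega
            have hwc : IsWalk (H.w i) c t (c :: l') := ⟨by simp, rfl, hlast, hchain⟩
            have hlen' : (c :: l').length ≤ n := by
              simp only [List.length_cons] at hlen ⊢; omega
            rcases eq_or_ne a c with rfl | hac
            · -- degenerate detour a - b - a : drop it
              obtain ⟨t', qt, p', hasc, hwalk, hbound⟩ := ih (a :: l') hlen' a t hwc hs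
              refine ⟨t', qt, p', hasc, hwalk, hbound.trans ?_⟩
              rw [pathLen_cons_cons (H.w i) a b, pathLen_cons_cons (H.w i) b a]
              exact le_add_self.trans le_add_self
            · -- shortcut a - c
              have hsc : H.w (i + 1) a c ≤ H.w i a b + H.w i b c :=
                w_succ_le_shortcut H h1 hih hac hs hcl hbL
              have hadj : Adj (H.w (i + 1)) a c :=
                ⟨hac, lt_of_le_of_lt hsc (WithTop.add_lt_top.2 ⟨hab.2, hbc.2⟩)⟩
              obtain ⟨t', qt, p', hasc, hwalk, hbound⟩ := ih (c :: l') hlen' c t hwc hcl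
              obtain ⟨hp1, hp2, hp3, hp4⟩ := hwalk
              obtain ⟨p'', rfl⟩ : ∃ p'', p' = c :: p'' := by
                cases p' with
                | nil => exact absurd rfl hp1
                | cons d p'' =>
                  simp only [List.head?_cons, Option.some.injEq] at hp2
                  exact ⟨p'', by rw [hp2]⟩
              refine ⟨t', qt, a :: c :: p'', hasc,
                ⟨by simp, rfl, by rw [List.getLast?_cons_cons]; exact hp3,
                  List.isChain_cons_cons.2 ⟨hadj, hp4⟩⟩, ?_⟩
              rw [pathLen_cons_cons (H.w (i + 1)) a c, pathLen_cons_cons (H.w i) a b,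
                pathLen_cons_cons (H.w i) b c]
              calc H.w (i + 1) a c + pathLen (H.w (i + 1)) (c :: p'') +
                    pathLen (fun a b => H.w (level H a) a b) qt
                  ≤ H.w (i + 1) a c + pathLen (H.w i) (c :: l') := by
                    rw [add_assoc]; exact add_le_add_right hbound _
                _ ≤ (H.w i a b + H.w i b c) + pathLen (H.w i) (c :: l') :=
                    add_le_add_left hsc _
                _ = H.w i a b + (H.w i b c + pathLen (H.w i) (c :: l')) := add_assoc _ _ _
        · -- edge a - b survives to level i+1
          have hE : H.w (i + 1) a b ≤ H.w i a b := w_succ_le_edge H h1 hih hab.1 hs hbl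
          have hadj : Adj (H.w (i + 1)) a b := ⟨hab.1, lt_of_le_of_lt hE hab.2⟩
          have hlen' : (b :: l).length ≤ n := by
            simp only [List.length_cons] at hlen ⊢; omega
          obtain ⟨t', qt, p', hasc, hwalk, hbound⟩ := ih (b :: l) hlen' b t hwb hbl
          obtain ⟨hp1, hp2, hp3, hp4⟩ := hwalk
          obtain ⟨p'', rfl⟩ : ∃ p'', p' = b :: p'' := by
            cases p' with
            | nil => exact absurd rfl hp1
            | cons d p'' =>
              simp only [List.head?_cons, Option.some.injEq] at hp2
              exact ⟨p'', by rw [hp2]⟩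
          refine ⟨t', qt, a :: b :: p'', hasc,
            ⟨by simp, rfl, by rw [List.getLast?_cons_cons]; exact hp3,
              List.isChain_cons_cons.2 ⟨hadj, hp4⟩⟩, ?_⟩
          rw [pathLen_cons_cons (H.w (i + 1)) a b, pathLen_cons_cons (H.w i) a b]
          calc H.w (i + 1) a b + pathLen (H.w (i + 1)) (b :: p'') +
                pathLen (fun a b => H.w (level H a) a b) qt
              ≤ H.w (i + 1) a b + pathLen (H.w i) (b :: l) := by
                rw [add_assoc]; exact add_le_add_right hbound _
            _ ≤ H.w i a b + pathLen (H.w i) (b :: l) := add_le_add_left hE _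

end Transform
section Claim

variable {h : ℕ} (H : VertexHierarchy V h)

lemma claim_top (s t : V) (p : List V) (hw : IsWalk (H.w h) s t p) :
    ∃ x qs qt, IsAscending H s x qs ∧ IsAscending H t x qt ∧
      pathLen (fun a b => H.w (level H a) a b) qs +
        pathLen (fun a b => H.w (level H a) a b) qt ≤ pathLen (H.w h) p := by
  obtain ⟨hne, hhead, hlast, hchain⟩ := hw
  cases p with
  | nil => exact absurd rfl hne
  | cons a l =>
    simp only [List.head?_cons, Option.some.injEq] at hhead
    subst hhead
    cases l with
    | nil =>
      simp only [List.getLast?_singleton, Option.some.injEq] at hlast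
      subst hlast
      refine ⟨a, [a], [a], ⟨by simp, rfl, by simp, List.isChain_singleton a⟩,
        ⟨by simp, rfl, by simp, List.isChain_singleton a⟩, ?_⟩
      simp [pathLen_single]
    | cons b l' =>
      exfalso
      have hab : Adj (H.w h) a b := (List.isChain_cons_cons.1 hchain).1
      have hlv := adj_level H H.h_pos le_rfl hab
      have haL : a ∈ H.L h := by
        have hua := (level_spec H a).2.1
        have hsa := (level_spec H a).2.2
        have heq : level H a = h := by omega
        rwa [heq] at hsa
      have hbL : b ∈ H.L h := by
        have hub := (level_spec H b).2.1
        have hsb := (level_spec H b).2.2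
        have heq : level H b = h := by omega
        rwa [heq] at hsb
      exact H.indep h H.h_pos le_rfl a haL b hbL hab

lemma claim : ∀ n i, 1 ≤ i → i ≤ h → h ≤ i + n → ∀ s t : V, ∀ p : List V,
    IsWalk (H.w i) s t p →
    ∃ x qs qt, IsAscending H s x qs ∧ IsAscending H t x qt ∧
      pathLen (fun a b => H.w (level H a) a b) qs +
        pathLen (fun a b => H.w (level H a) a b) qt ≤ pathLen (H.w i) p := by
  intro n
  induction n with
  | zero =>
    intro i h1 h2 h3 s t p hw
    have hieq : i = h := by omega
    subst hieq
    exact claim_top H s t p hw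
  | succ n ih =>
    intro i h1 h2 h3 s t p hw
    rcases eq_or_lt_of_le h2 with rfl | hlt
    · exact claim_top H s t p hw
    rcases eq_or_ne s t with rfl | hst
    · refine ⟨s, [s], [s], ⟨by simp, rfl, by simp, List.isChain_singleton s⟩,
        ⟨by simp, rfl, by simp, List.isChain_singleton s⟩, ?_⟩
      simp only [pathLen_single, add_zero]
      exact zero_le
    obtain ⟨hne, hhead, hlast, hchain⟩ := hw
    cases p with
    | nil => exact absurd rfl hne
    | cons a l =>
      simp only [List.head?_cons, Option.some.injEq] at hhead
      subst hhead
      cases l with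
      | nil =>
        simp only [List.getLast?_singleton, Option.some.injEq] at hlast
        exact absurd hlast hst
      | cons b l' =>
        have hab : Adj (H.w i) a b := (List.isChain_cons_cons.1 hchain).1
        have hlv := adj_level H h1 (le_of_lt hlt) hab
        rcases lt_or_ge (level H a) (i + 1) with hal | hal
        · -- a ∈ L i : first step of the walk is an ascent
          have hai : level H a = i := by omega
          have haL : a ∈ H.L i := hai ▸ (level_spec H a).2.2
          have hbl : i + 1 ≤ level H b := by
            rcases eq_or_lt_of_le hlv.2 with he | hl
            · exfalso
              have hbL : b ∈ H.L i := he ▸ (level_spec H b).2.2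
              exact H.indep i h1 (le_of_lt hlt) a haL b hbL hab
            · omega
          have hwb : IsWalk (H.w i) b t (b :: l') :=
            ⟨by simp, rfl, by rwa [List.getLast?_cons_cons] at hlast,
              (List.isChain_cons_cons.1 hchain).2⟩
          obtain ⟨t', qt0, p', hasc0, hwalk, hbound⟩ :=
            transform H h1 hlt (b :: l').length (b :: l') le_rfl b t hwb hbl
          obtain ⟨x, qs1, qt1, hqs1, hqt1, hb2⟩ :=
            ih (i + 1) (by omega) (by omega) (by omega) b t' p' hwalk
          have step : IsAscending H a b [a, b] :=
            ⟨by simp, rfl, by simp, List.isChain_pair.2 ⟨by omega, by rw [hai]; exact hab⟩⟩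
          have hqs := trail_append step hqs1
          have hqt := trail_append hasc0 hqt1
          refine ⟨x, [a, b] ++ qs1.tail, qt0 ++ qt1.tail, hqs, hqt, ?_⟩
          have e1 : pathLen (fun a b => H.w (level H a) a b) ([a, b] ++ qs1.tail) =
              pathLen (fun a b => H.w (level H a) a b) [a, b] +
                pathLen (fun a b => H.w (level H a) a b) qs1 :=
            pathLen_append _ b [a, b] (by simp) (by simp) qs1 hqs1.2.1
          have e2 : pathLen (fun a b => H.w (level H a) a b) (qt0 ++ qt1.tail) =
              pathLen (fun a b => H.w (level H a) a b) qt0 +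
                pathLen (fun a b => H.w (level H a) a b) qt1 :=
            pathLen_append _ t' qt0 hasc0.1 hasc0.2.2.1 qt1 hqt1.2.1
          have e3 : pathLen (fun a b => H.w (level H a) a b) [a, b] = H.w i a b := by
            simp [pathLen_cons_cons, pathLen_single, hai]
          rw [e1, e2, e3, pathLen_cons_cons (H.w i) a b]
          set A := pathLen (fun a b => H.w (level H a) a b) qs1
          set B := pathLen (fun a b => H.w (level H a) a b) qt0
          set C := pathLen (fun a b => H.w (level H a) a b) qt1
          calc H.w i a b + A + (B + C) = H.w i a b + ((A + C) + B) := by ring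
            _ ≤ H.w i a b + (pathLen (H.w (i + 1)) p' + B) := by
                exact add_le_add_right (add_le_add_left hb2 B) _
            _ ≤ H.w i a b + pathLen (H.w i) (b :: l') := add_le_add_right hbound _
        · -- level of a is at least i+1 : transform the whole walk
          have hwfull : IsWalk (H.w i) a t (a :: b :: l') := ⟨by simp, rfl, hlast, hchain⟩
          obtain ⟨t', qt0, p', hasc0, hwalk, hbound⟩ :=
            transform H h1 hlt (a :: b :: l').length (a :: b :: l') le_rfl a t hwfull hal
          obtain ⟨x, qs1, qt1, hqs1, hqt1, hb2⟩ :=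
            ih (i + 1) (by omega) (by omega) (by omega) a t' p' hwalk
          have hqt := trail_append hasc0 hqt1
          refine ⟨x, qs1, qt0 ++ qt1.tail, hqs1, hqt, ?_⟩
          have e2 : pathLen (fun a b => H.w (level H a) a b) (qt0 ++ qt1.tail) =
              pathLen (fun a b => H.w (level H a) a b) qt0 +
                pathLen (fun a b => H.w (level H a) a b) qt1 :=
            pathLen_append _ t' qt0 hasc0.1 hasc0.2.2.1 qt1 hqt1.2.1
          rw [e2]
          set A := pathLen (fun a b => H.w (level H a) a b) qs1
          set B := pathLen (fun a b => H.w (level H a) a b) qt0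
          set C := pathLen (fun a b => H.w (level H a) a b) qt1
          calc A + (B + C) = (A + C) + B := by ring
            _ ≤ pathLen (H.w (i + 1)) p' + B := add_le_add_left hb2 B
            _ ≤ pathLen (H.w i) (a :: b :: l') := hbound

end Claim
/-- distance is realized through common ancestors (with true
distances); in particular two vertices are connected iff they have a common
ancestor. -/
theorem dist_eq_iInf_common_ancestor [Fintype V] {h : ℕ}
    (H : VertexHierarchy V h) (s t : V) :
    (wdist (H.w 1) s t =
      ⨅ x ∈ Anc H s ∩ Anc H t, (wdist (H.w 1) s x + wdist (H.w 1) t x)) ∧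
    (wdist (H.w 1) s t < ⊤ ↔ (Anc H s ∩ Anc H t).Nonempty) := by
  have hsym1 := (H.wgraph 1 le_rfl H.h_pos).1
  have main : ∀ p : List V, IsWalk (H.w 1) s t p →
      ∃ x, x ∈ Anc H s ∩ Anc H t ∧
        wdist (H.w 1) s x + wdist (H.w 1) t x ≤ pathLen (H.w 1) p := by
    intro p hp
    obtain ⟨x, qs, qt, hqs, hqt, hb⟩ :=
      claim H h 1 le_rfl H.h_pos (by omega) s t p hp
    refine ⟨x, ⟨⟨qs, hqs⟩, ⟨qt, hqt⟩⟩, ?_⟩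
    exact (add_le_add (wdist_le_ascLen H qs s x hqs) (wdist_le_ascLen H qt t x hqt)).trans hb
  constructor
  · apply le_antisymm
    · refine le_iInf₂ fun x hx => ?_
      calc wdist (H.w 1) s t ≤ wdist (H.w 1) s x + wdist (H.w 1) x t :=
            wdist_triangle _ s x t
        _ = wdist (H.w 1) s x + wdist (H.w 1) t x := by rw [wdist_symm hsym1 x t]
    · rw [wdist]
      refine le_iInf fun q => ?_
      obtain ⟨x, hx, hle⟩ := main q.1 q.2
      exact (iInf₂_le x hx).trans hle
  · constructor
    · intro hfin
      rcases isEmpty_or_nonempty {p : List V // IsWalk (H.w 1) s t p} with he | hne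
      · rw [wdist, iInf_of_empty] at hfin
        exact absurd hfin (lt_irrefl ⊤)
      · obtain ⟨⟨p, hp⟩⟩ := hne
        obtain ⟨x, hx, _⟩ := main p hp
        exact ⟨x, hx⟩
    · rintro ⟨x, hxs, hxt⟩
      obtain ⟨qs, hqs⟩ := hxs
      obtain ⟨qt, hqt⟩ := hxt
      have h1 : wdist (H.w 1) s x < ⊤ :=
        lt_of_le_of_lt (wdist_le_ascLen H qs s x hqs)
          (pathLen_lt_top (fun a b hab => hab.2.2) qs hqs.2.2.2)
      have h2 : wdist (H.w 1) t x < ⊤ :=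
        lt_of_le_of_lt (wdist_le_ascLen H qt t x hqt)
          (pathLen_lt_top (fun a b hab => hab.2.2) qt hqt.2.2.2)
      calc wdist (H.w 1) s t ≤ wdist (H.w 1) s x + wdist (H.w 1) x t :=
            wdist_triangle _ s x t
        _ = wdist (H.w 1) s x + wdist (H.w 1) t x := by rw [wdist_symm hsym1 x t]
        _ < ⊤ := WithTop.add_lt_top.2 ⟨h1, h2⟩

end ISLabel
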